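/- Let R be a reduced Noetherian commutative ring, let t ∈ R be a non-zero-divisor, assume R is integrally closed in the localization R[t⁻¹], and let R' denote the integral closure of R in its total ring of fractions. Then R ∩ tR' = tR; equivalently, the natural ring homomorphism R/tR → R'/tR' is injective. (A step in the proof of Lemma 2.5 of the paper.) -/

import Mathlib

set_option synthInstance.maxHeartbeats 1000000

/-- Let `R` be a reduced Noetherian ring, `t` a non-zero-divisor, and suppose `R` is
integrally closed in `R[t⁻¹]`.  Let `R'` be the integral closure of `R` in its total
ring of fractions.  Then `R ∩ tR' = tR`: an element `x ∈ R` whose image in the total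
ring of fractions lies in `t·R'` already lies in `tR`.  Equivalently, `R/tR → R'/tR'`
is injective. -/
theorem inter_t_mul_integralClosure_eq
    (R : Type*) [CommRing R] [IsNoetherianRing R] [IsReduced R]
    (t : R) (ht : t ∈ nonZeroDivisors R)
    (hic : ∀ x : Localization.Away t, IsIntegral R x →
      x ∈ (algebraMap R (Localization.Away t)).range) :
    ∀ x : R,
      (∃ y ∈ integralClosure R (FractionRing R),
          algebraMap R (FractionRing R) x = algebraMap R (FractionRing R) t * y) ↔
        x ∈ Ideal.span {t} := by
  intro x
  have hM : Submonoid.powers t ≤ nonZeroDivisors R := Submonoid.powers_le.2 ht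
  have hMc : Submonoid.powers t ≤ (nonZeroDivisors R).comap (RingHom.id R) := hM
  set g : Localization.Away t →+* FractionRing R :=
    IsLocalization.map (FractionRing R) (RingHom.id R) hMc with hg
  have hgcomp : g.comp (algebraMap R (Localization.Away t)) =
      algebraMap R (FractionRing R) := by
    rw [hg, IsLocalization.map_comp]; rfl
  have hginj : Function.Injective g := by
    rw [injective_iff_map_eq_zero]
    intro a ha
    obtain ⟨⟨z, s⟩, rfl⟩ := IsLocalization.mk'_surjective (Submonoid.powers t) a
    rw [hg, IsLocalization.map_mk'] at ha
    rw [IsLocalization.mk'_eq_zero_iff] at ha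
    obtain ⟨m, hm⟩ := ha
    have hz : z = 0 := mem_nonZeroDivisors_iff_right.mp m.2 z (by simpa [mul_comm] using hm)
    rw [hz]; exact IsLocalization.mk'_zero _
  constructor
  · rintro ⟨y, hy, hxy⟩
    set a : Localization.Away t :=
      IsLocalization.mk' (Localization.Away t) x (⟨t, Submonoid.mem_powers t⟩ :
        Submonoid.powers t) with hadef
    have hspec : algebraMap R (Localization.Away t) t * a =
        algebraMap R (Localization.Away t) x := by
      rw [hadef]
      simpa using IsLocalization.mk'_spec' (Localization.Away t) x
        (⟨t, Submonoid.mem_powers t⟩ : Submonoid.powers t)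
    have hga : g a = y := by
      have hu : IsUnit (algebraMap R (FractionRing R) t) :=
        IsLocalization.map_units (FractionRing R) ⟨t, ht⟩
      apply hu.mul_left_cancel
      have := congrArg g hspec
      rw [map_mul] at this
      have h1 : g (algebraMap R (Localization.Away t) t) =
          algebraMap R (FractionRing R) t := by
        rw [← hgcomp]; rfl
      have h2 : g (algebraMap R (Localization.Away t) x) =
          algebraMap R (FractionRing R) x := by
        rw [← hgcomp]; rfl
      rw [h1, h2] at this
      rw [this, ← hxy]
    have hyint : IsIntegral R y := hy
    obtain ⟨p, hpmonic, hpeval⟩ := hyint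
    have haint : IsIntegral R a := by
      refine ⟨p, hpmonic, ?_⟩
      apply hginj
      rw [map_zero, Polynomial.hom_eval₂, hgcomp, hga]
      exact hpeval
    obtain ⟨r, hr⟩ := hic a haint
    have : algebraMap R (Localization.Away t) (t * r) =
        algebraMap R (Localization.Away t) x := by
      rw [map_mul, hr, hspec]
    have hx : t * r = x := IsLocalization.injective (Localization.Away t) hM this
    rw [Ideal.mem_span_singleton]
    exact ⟨r, hx.symm⟩
  · rw [Ideal.mem_span_singleton]
    rintro ⟨r, rfl⟩
    exact ⟨algebraMap R (FractionRing R) r, isIntegral_algebraMap, by rw [map_mul]⟩
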